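/- Let K be a field and V a K-vector space. Then V is homogeneous if and only if V is infinite-dimensional over K. -/

import Mathlib

universe u v

/-- A `K`-vector space `V` is homogeneous if for all finite-dimensional `K`-vector
spaces `W₀`, `W₁`, every injective `K`-linear map `j : W₀ → W₁` and every injective
`K`-linear map `χ : W₀ → V` admit an injective `K`-linear map `u : W₁ → V` with
`u ∘ j = χ`. -/
def IsHomogeneousVectorSpace (K : Type u) (V : Type u) [Field K]
    [AddCommGroup V] [Module K V] : Prop :=
  ∀ (W₀ W₁ : Type u) [AddCommGroup W₀] [Module K W₀] [AddCommGroup W₁] [Module K W₁],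
    FiniteDimensional K W₀ → FiniteDimensional K W₁ →
      ∀ (j : W₀ →ₗ[K] W₁) (χ : W₀ →ₗ[K] V),
        Function.Injective j → Function.Injective χ →
          ∃ u : W₁ →ₗ[K] V, Function.Injective u ∧ ∀ w, u (j w) = χ w

/-- A `K`-vector space is homogeneous if and only if it is infinite-dimensional
over `K`. -/
theorem homogeneousVectorSpace_iff (K V : Type u) [Field K]
    [AddCommGroup V] [Module K V] :
    IsHomogeneousVectorSpace K V ↔ ¬ FiniteDimensional K V := by
  constructor
  · intro h hfin
    -- embed V × K into V, contradiction with finrank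
    obtain ⟨u, hu, -⟩ := h V (V × K) hfin inferInstance
      (LinearMap.inl K V K) LinearMap.id
      (LinearMap.inl_injective) Function.injective_id
    have hle := LinearMap.finrank_le_finrank_of_injective hu
    rw [Module.finrank_prod, Module.finrank_self] at hle
    omega
  · intro hV
    intro W₀ W₁ _ _ _ _ hW₀ hW₁ j χ hj hχ
    classical
    -- complement of range j in W₁
    obtain ⟨C, hC⟩ := Submodule.exists_isCompl (LinearMap.range j)
    -- complement of range χ in V
    obtain ⟨D, hD⟩ := Submodule.exists_isCompl (LinearMap.range χ)
    -- D is infinite dimensional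
    have hDinf : ¬ FiniteDimensional K D := by
      intro hDfin
      exact hV ((Submodule.prodEquivOfIsCompl _ _ hD).finiteDimensional)
    have hrankD : (Module.finrank K C : Cardinal) ≤ Module.rank K D := by
      by_contra hlt
      push_neg at hlt
      exact hDinf (Module.rank_lt_aleph0_iff.mp
        (hlt.trans (Cardinal.nat_lt_aleph0 _)))
    -- linearly independent family in D of size finrank C
    obtain ⟨v, hv⟩ := exists_linearIndependent_of_le_rank hrankD
    -- basis of C
    let b := Module.finBasis K C
    let f₂ : C →ₗ[K] V := D.subtype ∘ₗ b.constr K v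
    have hf₂range : ∀ c, f₂ c ∈ D := fun c => (b.constr K v c).2
    have hconstr_inj : Function.Injective (b.constr K v) := by
      rw [← LinearMap.ker_eq_bot, LinearMap.ker_eq_bot']
      intro c hc
      have h1 : ∑ i, b.repr c i • v i = 0 := by
        simpa [Module.Basis.constr_apply_fintype, Module.Basis.equivFun_apply] using hc
      have hz : ∀ i, b.repr c i = 0 :=
        Fintype.linearIndependent_iff.mp hv _ h1
      have : b.repr c = 0 := by ext i; exact hz i
      exact b.repr.map_eq_zero_iff.mp this
    have hf₂inj : Function.Injective f₂ :=
      (Submodule.injective_subtype D).comp hconstr_inj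
    -- map from range j to V
    let e : W₀ ≃ₗ[K] LinearMap.range j := LinearEquiv.ofInjective j hj
    let f₁ : (LinearMap.range j) →ₗ[K] V := χ ∘ₗ (e.symm : LinearMap.range j →ₗ[K] W₀)
    have hf₁range : ∀ x, f₁ x ∈ LinearMap.range χ := fun x => ⟨e.symm x, rfl⟩
    have hf₁inj : Function.Injective f₁ := hχ.comp e.symm.injective
    let F : (LinearMap.range j) × C →ₗ[K] V := f₁.coprod f₂
    have hFinj : Function.Injective F := by
      rw [← LinearMap.ker_eq_bot, LinearMap.ker_eq_bot']
      rintro ⟨x, y⟩ hxy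
      have hxy' : f₁ x + f₂ y = 0 := hxy
      have hx : f₁ x = -f₂ y := eq_neg_of_add_eq_zero_left hxy'
      have hmem : f₁ x ∈ (LinearMap.range χ) ⊓ D := by
        refine ⟨hf₁range x, ?_⟩
        rw [hx]; exact neg_mem (hf₂range y)
      rw [hD.inf_eq_bot, Submodule.mem_bot] at hmem
      have hy : f₂ y = 0 := by
        have := hxy'; rw [hmem, zero_add] at this; exact this
      have hx0 : x = 0 := hf₁inj (by rw [hmem, map_zero])
      have hy0 : y = 0 := hf₂inj (by rw [hy, map_zero])
      simp [hx0, hy0, Prod.ext_iff]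
    let φ := Submodule.prodEquivOfIsCompl _ _ hC
    refine ⟨F ∘ₗ (φ.symm : W₁ →ₗ[K] (LinearMap.range j) × C), ?_, ?_⟩
    · exact hFinj.comp φ.symm.injective
    · intro w
      have hmem : j w ∈ LinearMap.range j := ⟨w, rfl⟩
      have h1 : φ.symm (j w) = ((⟨j w, hmem⟩ : LinearMap.range j), 0) :=
        Submodule.prodEquivOfIsCompl_symm_apply_left (LinearMap.range j) C hC (⟨j w, hmem⟩ : LinearMap.range j)
      simp only [LinearMap.coe_comp, Function.comp_apply, LinearEquiv.coe_coe, h1]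
      show f₁ ⟨j w, hmem⟩ + f₂ 0 = χ w
      rw [map_zero, add_zero]
      show χ (e.symm ⟨j w, hmem⟩) = χ w
      congr 1
      have h2 : (⟨j w, hmem⟩ : LinearMap.range j) = e w :=
        Subtype.ext ((LinearEquiv.ofInjective_apply (h := hj) j w).symm)
      rw [h2, LinearEquiv.symm_apply_apply]
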